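/- Let (a_n)_{n≥1} be a sequence of positive reals with δ := a₁ + Σ_{n=1}^∞ a_{n+1}/a_n ≤ 1/4. Define M₁ = 2⌈1/(2a₁)⌉ and M_{n+1} = 2⌈1/(2 M₁⋯M_n a_{n+1})⌉ for n ≥ 1. Then Σ_{n=1}^∞ 1/M_n < 2δ. -/

import Mathlib

theorem stmt12 (a : ℕ → ℝ) (hpos : ∀ n ≥ 1, 0 < a n)
    (hsum : Summable (fun n : ℕ => a (n + 2) / a (n + 1)))
    (hδ : a 1 + ∑' n : ℕ, a (n + 2) / a (n + 1) ≤ 1/4)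
    (M : ℕ → ℕ)
    (hM1 : M 1 = 2 * ⌈1 / (2 * a 1)⌉₊)
    (hMrec : ∀ n ≥ 1, M (n + 1) =
      2 * ⌈1 / (2 * (∏ i ∈ Finset.Icc 1 n, (M i : ℝ)) * a (n + 1))⌉₊) :
    ∑' n : ℕ, 1 / (M (n + 1) : ℝ) < 2 * (a 1 + ∑' n : ℕ, a (n + 2) / a (n + 1)) := by
  set r : ℕ → ℝ := fun n : ℕ => a (n + 2) / a (n + 1) with hr
  have ha : ∀ n : ℕ, 0 < a (n + 1) := fun n => hpos (n + 1) (by omega)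
  have hrpos : ∀ n, 0 < r n := fun n => div_pos (ha (n + 1)) (ha n)
  have hS : ∀ n, r n ≤ (∑' n, r n) := fun n =>
    Summable.le_tsum hsum n (fun m _ => (hrpos m).le)
  have ha1 : 0 < a 1 := ha 0
  have hSpos : 0 ≤ ∑' n, r n := tsum_nonneg (fun n => (hrpos n).le)
  have hrle : ∀ n, r n ≤ 1 / 4 := fun n => le_trans (hS n) (by linarith)
  set P : ℕ → ℝ := fun n => ∏ i ∈ Finset.Icc 1 n, (M i : ℝ) with hP
  set b : ℕ → ℝ := fun n => P n * a (n + 1) with hb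
  have hPnn : ∀ n, 0 ≤ P n := fun n => Finset.prod_nonneg (fun i _ => Nat.cast_nonneg _)
  have hb0 : b 0 = a 1 := by simp [hb, hP]
  -- the main step
  have step : ∀ n, 0 < b n → 0 < M (n + 1) →
      (1 / b n ≤ (M (n + 1) : ℝ)) ∧ ((M (n + 1) : ℝ) ≤ 1 / b n + 2) ∧
      b (n + 1) = (M (n + 1) : ℝ) * b n * r n ∧ 0 < b (n + 1) ∧ 0 < M (n + 2) := by
    intro n hbn hMn
    have hPn : 0 < P n := by
      rcases (hPnn n).lt_or_eq with h | h
      · exact h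
      · exfalso; have : b n = 0 := by rw [hb]; simp [← h]
        linarith
    have hMval : (M (n + 1) : ℝ) = 2 * (⌈1 / (2 * b n)⌉₊ : ℝ) := by
      rcases Nat.eq_zero_or_pos n with rfl | hn
      · rw [hM1]; push_cast; rw [hb0]
      · rw [hMrec n hn]; push_cast
        congr 2
        rw [hb, hP]; ring_nf
    have hx : 0 < 1 / (2 * b n) := by positivity
    have h1 : 1 / b n ≤ (M (n + 1) : ℝ) := by
      rw [hMval]
      have := Nat.le_ceil (1 / (2 * b n))
      rw [div_le_iff₀ hbn]
      rw [div_le_iff₀ (by linarith : (0:ℝ) < 2 * b n)] at this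
      nlinarith
    have h2 : (M (n + 1) : ℝ) ≤ 1 / b n + 2 := by
      rw [hMval]
      have := (Nat.ceil_lt_add_one hx.le).le
      have h3 : 1 / (2 * b n) = (1 / b n) / 2 := by
        rw [div_div]; ring_nf
      nlinarith
    have hbsucc : b (n + 1) = (M (n + 1) : ℝ) * b n * r n := by
      have hprod : P (n + 1) = P n * (M (n + 1) : ℝ) := by
        rw [hP]; exact Finset.prod_Icc_succ_top (by omega) _
      have haux : b n * r n = P n * a (n + 2) := by
        show P n * a (n + 1) * (a (n + 2) / a (n + 1)) = P n * a (n + 2)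
        rw [mul_assoc, mul_div_assoc', mul_comm (a (n+1)), mul_div_assoc,
          div_self (ha n).ne', mul_one]
      show P (n + 1) * a (n + 2) = _
      rw [hprod, mul_assoc ((M (n + 1) : ℝ)) (b n) (r n), haux]
      ring
    have hMpos : (0:ℝ) < (M (n + 1) : ℝ) := by
      have : (0:ℝ) < 1 / b n := by positivity
      linarith
    have hbspos : 0 < b (n + 1) := by
      rw [hbsucc]; exact mul_pos (mul_pos hMpos hbn) (hrpos n)
    have hM2 : 0 < M (n + 2) := by
      rw [hMrec (n + 1) (by omega)]
      have hX : 0 < 1 / (2 * (∏ i ∈ Finset.Icc 1 (n + 1), (M i : ℝ)) * a (n + 2)) := by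
        have hPe : (∏ i ∈ Finset.Icc 1 (n + 1), (M i : ℝ)) = P (n + 1) := rfl
        rw [hPe]
        have h2b : 2 * P (n + 1) * a (n + 2) = 2 * b (n + 1) := by
          show _ = 2 * (P (n + 1) * a (n + 2)); ring
        rw [h2b]
        exact one_div_pos.mpr (by linarith)
      exact Nat.mul_pos (by norm_num) (Nat.ceil_pos.mpr hX)
    exact ⟨h1, h2, hbsucc, hbspos, hM2⟩
  -- invariant
  have key : ∀ n, 0 < b n ∧ b n ≤ 1 / 2 ∧ 0 < M (n + 1) := by
    intro n
    induction n with
    | zero =>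
      refine ⟨by rw [hb0]; exact ha1, by rw [hb0]; linarith, ?_⟩
      rw [hM1]
      have : 0 < 1 / (2 * a 1) := by positivity
      have := Nat.ceil_pos.mpr this
      omega
    | succ n ih =>
      obtain ⟨hbn, hbn2, hMn⟩ := ih
      obtain ⟨h1, h2, h3, h4, h5⟩ := step n hbn hMn
      have hbsle : b (n + 1) ≤ 2 * r n := by
        rw [h3]
        have : (M (n + 1) : ℝ) * b n ≤ 1 + 2 * b n := by
          have := mul_le_mul_of_nonneg_right h2 hbn.le
          rw [add_mul, one_div, inv_mul_cancel₀ hbn.ne'] at this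
          linarith
        nlinarith [hrpos n, hbn]
      exact ⟨h4, by have := hrle n; linarith, h5⟩
  -- bound 1/M(n+1) ≤ b n
  have hinvM : ∀ n, 1 / (M (n + 1) : ℝ) ≤ b n := by
    intro n
    obtain ⟨hbn, _, hMn⟩ := key n
    obtain ⟨h1, _, _, _, _⟩ := step n hbn hMn
    have hMpos : (0:ℝ) < (M (n + 1) : ℝ) := by exact_mod_cast hMn
    rw [div_le_iff₀ hMpos]
    rw [div_le_iff₀ hbn] at h1
    linarith
  have hbnext : ∀ n, b (n + 1) ≤ 2 * r n := by
    intro n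
    obtain ⟨hbn, hbn2, hMn⟩ := key n
    obtain ⟨h1, h2, h3, _, _⟩ := step n hbn hMn
    rw [h3]
    have : (M (n + 1) : ℝ) * b n ≤ 1 + 2 * b n := by
      have := mul_le_mul_of_nonneg_right h2 hbn.le
      rw [add_mul, one_div, inv_mul_cancel₀ hbn.ne'] at this
      linarith
    nlinarith [hrpos n]
  -- comparison sequence
    -- c 0 = a 1, c (n+1) = 2 r n
  set c : ℕ → ℝ := fun n => Nat.rec (a 1) (fun m _ => 2 * r m) n with hc
  have hc0 : c 0 = a 1 := rfl
  have hcs : ∀ n, c (n + 1) = 2 * r n := fun n => rfl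
  have hcsum : Summable c := by
    rw [← (summable_nat_add_iff 1)]
    simpa [hcs] using hsum.mul_left 2
  have hle : ∀ n, 1 / (M (n + 1) : ℝ) ≤ c n := by
    intro n
    cases n with
    | zero => rw [hc0, ← hb0]; exact hinvM 0
    | succ n => rw [hcs]; exact le_trans (hinvM (n + 1)) (hbnext n)
  have hfsum : Summable (fun n : ℕ => 1 / (M (n + 1) : ℝ)) :=
    Summable.of_nonneg_of_le (fun n => by positivity) hle hcsum
  have hmain : ∑' n, 1 / (M (n + 1) : ℝ) ≤ ∑' n, c n :=
    Summable.tsum_le_tsum hle hfsum hcsum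
  have hctsum : ∑' n, c n = a 1 + 2 * ∑' n, r n := by
    rw [Summable.tsum_eq_zero_add hcsum, hc0]
    congr 1
    simp only [hcs]
    exact tsum_mul_left
  rw [hctsum] at hmain
  linarith
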